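/- For every morphism (α₁,…,αₙ) : ([k],[k],…,[k]) → ([p₁],…,[pₙ]) in the n-fold product of the simplex category in which each αᵢ is an epimorphism (a surjective monotone map), there exists a terminal factorization through a diagonal morphism: an epimorphism β : [k] → [q] and a factorization of (α₁,…,αₙ) through (β,β,…,β) such that every other factorization of (α₁,…,αₙ) through a diagonal of an epimorphism γ : [k] → [r] factors uniquely through (β,…,β) via an epimorphism δ : [r] → [q] with δ∘γ = β. -/

import Mathlib

open CategoryTheory

/-- No jumps between `x` and `y` implies `f x = f y`. -/
lemma tfd_nojump {k m : ℕ} (f : Fin (k+1) →o Fin (m+1)) :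
    ∀ (d : ℕ) (x y : Fin (k+1)), y.val = x.val + d →
      (∀ j : Fin k, x.val ≤ j.val → j.val < y.val → f j.castSucc = f j.succ) →
      f x = f y := by
  intro d
  induction d with
  | zero => intro x y h _; congr 1; exact Fin.ext (by omega)
  | succ d ih =>
    intro x y h hj
    have hxk : x.val < k := by omega
    have j : Fin k := ⟨x.val, hxk⟩
    have h1 : f x = f ((⟨x.val, hxk⟩ : Fin k).castSucc) :=
      congrArg f (Fin.ext (by simp))
    have h2 : f ((⟨x.val, hxk⟩ : Fin k).castSucc) = f ((⟨x.val, hxk⟩ : Fin k).succ) :=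
      hj _ le_rfl (by simp; omega)
    have h3 : f ((⟨x.val, hxk⟩ : Fin k).succ) = f y := by
      apply ih _ y (by simp [Fin.val_succ]; omega)
      intro j' hj1 hj2
      exact hj j' (by simp [Fin.val_succ] at hj1; omega) hj2
    rw [h1, h2, h3]

/-- Descend a monotone map along a surjective monotone map constant on its fibers. -/
lemma tfd_descend {k q m : ℕ} (β : Fin (k+1) →o Fin (q+1)) (hβ : Function.Surjective β)
    (f : Fin (k+1) →o Fin (m+1)) (h : ∀ x y, β x = β y → f x = f y) :
    ∃ g : Fin (q+1) →o Fin (m+1), ∀ x, g (β x) = f x := by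
  refine ⟨⟨fun t => f (Function.surjInv hβ t), ?_⟩, ?_⟩
  · intro t t' htt
    set x := Function.surjInv hβ t with hx
    set x' := Function.surjInv hβ t' with hx'
    have hbx : β x = t := Function.surjInv_eq hβ t
    have hbx' : β x' = t' := Function.surjInv_eq hβ t'
    rcases le_total x x' with hle | hle
    · exact f.monotone hle
    · have : t' ≤ t := by rw [← hbx, ← hbx']; exact β.monotone hle
      have : t = t' := le_antisymm htt this
      exact le_of_eq (h _ _ (by rw [hbx, hbx', this]))
  · intro x
    exact h _ _ (Function.surjInv_eq hβ (β x))


theorem terminal_factorization_through_diagonal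
    (n k : ℕ) (hn : 1 ≤ n) (p : Fin n → ℕ)
    (α : ∀ i, SimplexCategory.mk k ⟶ SimplexCategory.mk (p i))
    (hα : ∀ i, Function.Surjective (α i).toOrderHom) :
    ∃ (q : ℕ) (β : SimplexCategory.mk k ⟶ SimplexCategory.mk q)
      (γ : ∀ i, SimplexCategory.mk q ⟶ SimplexCategory.mk (p i)),
      Function.Surjective β.toOrderHom ∧
      (∀ i, α i = β ≫ γ i) ∧
      (∀ (r : ℕ) (γ' : SimplexCategory.mk k ⟶ SimplexCategory.mk r)
         (δ' : ∀ i, SimplexCategory.mk r ⟶ SimplexCategory.mk (p i)),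
         Function.Surjective γ'.toOrderHom →
         (∀ i, α i = γ' ≫ δ' i) →
         ∃! δ : SimplexCategory.mk r ⟶ SimplexCategory.mk q,
           Function.Surjective δ.toOrderHom ∧ γ' ≫ δ = β ∧ ∀ i, δ ≫ γ i = δ' i) := by
  classical
  -- the set of "jump" positions
  set J : Finset (Fin k) :=
    Finset.univ.filter
      (fun j => ∃ i, (α i).toOrderHom j.castSucc ≠ (α i).toOrderHom j.succ) with hJ
  -- counting function
  set c : ℕ → ℕ := fun v => (J.filter (fun j => j.val < v)).card with hc
  have cmono : Monotone c := by
    intro u v huv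
    apply Finset.card_le_card
    intro j hj
    simp only [Finset.mem_filter] at hj ⊢
    exact ⟨hj.1, by omega⟩
  have czero : c 0 = 0 := by
    simp [hc]
  have cstep : ∀ v, c (v+1) ≤ c v + 1 := by
    intro v
    have hsub : J.filter (fun j => j.val < v + 1) ⊆
        (J.filter (fun j => j.val < v)) ∪ (J.filter (fun j => j.val = v)) := by
      intro j hj
      simp only [Finset.mem_filter, Finset.mem_union] at hj ⊢
      rcases hj with ⟨h1, h2⟩
      by_cases hv : j.val < v
      · exact Or.inl ⟨h1, hv⟩
      · exact Or.inr ⟨h1, by omega⟩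
    have h1 : (J.filter (fun j => (j:Fin k).val = v)).card ≤ 1 := by
      apply Finset.card_le_one.2
      intro a ha b hb
      simp only [Finset.mem_filter] at ha hb
      exact Fin.ext (ha.2.trans hb.2.symm)
    calc c (v+1) ≤ ((J.filter (fun j => j.val < v)) ∪ (J.filter (fun j => j.val = v))).card :=
          Finset.card_le_card hsub
      _ ≤ c v + (J.filter (fun j => (j:Fin k).val = v)).card := Finset.card_union_le _ _
      _ ≤ c v + 1 := by omega
  have csurj : ∀ v, ∀ t ≤ c v, ∃ w ≤ v, c w = t := by
    intro v
    induction v with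
    | zero => intro t ht; exact ⟨0, le_rfl, by omega⟩
    | succ v ih =>
      intro t ht
      by_cases h : t ≤ c v
      · obtain ⟨w, hw, hw'⟩ := ih t h
        exact ⟨w, by omega, hw'⟩
      · have := cstep v
        have : t = c (v+1) := by omega
        exact ⟨v+1, le_rfl, this.symm⟩
  -- key equivalence
  have ckey : ∀ x y : Fin (k+1), x.val ≤ y.val →
      (c x.val = c y.val ↔ ∀ i, (α i).toOrderHom x = (α i).toOrderHom y) := by
    intro x y hxy
    constructor
    · intro hcc i
      have hSeq : J.filter (fun j => j.val < x.val) = J.filter (fun j => j.val < y.val) := by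
        apply Finset.eq_of_subset_of_card_le
        · intro j hj
          simp only [Finset.mem_filter] at hj ⊢
          exact ⟨hj.1, by omega⟩
        · exact le_of_eq hcc.symm
      apply tfd_nojump ((α i).toOrderHom) (y.val - x.val) x y (by omega)
      intro j hj1 hj2
      by_contra hne
      have hjJ : j ∈ J := by
        simp only [hJ, Finset.mem_filter, Finset.mem_univ, true_and]
        exact ⟨i, hne⟩
      have hmem : j ∈ J.filter (fun j => j.val < x.val) := by
        rw [hSeq]
        exact Finset.mem_filter.2 ⟨hjJ, hj2⟩
      rw [Finset.mem_filter] at hmem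
      omega
    · intro hall
      have : J.filter (fun j => j.val < x.val) = J.filter (fun j => j.val < y.val) := by
        apply Finset.ext
        intro j
        simp only [Finset.mem_filter]
        constructor
        · rintro ⟨h1, h2⟩; exact ⟨h1, by omega⟩
        · rintro ⟨h1, h2⟩
          refine ⟨h1, ?_⟩
          by_contra hlt
          -- x.val ≤ j.val < y.val, so no jump at j
          simp only [hJ, Finset.mem_filter, Finset.mem_univ, true_and] at h1
          obtain ⟨i, hi⟩ := h1
          apply hi
          have m := (α i).toOrderHom.monotone
          have e1 : (α i).toOrderHom x ≤ (α i).toOrderHom j.castSucc :=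
            m (by simp [Fin.le_def]; omega)
          have e2 : (α i).toOrderHom j.castSucc ≤ (α i).toOrderHom j.succ :=
            m (by simp [Fin.le_def])
          have e3 : (α i).toOrderHom j.succ ≤ (α i).toOrderHom y :=
            m (by simp [Fin.le_def]; omega)
          have := hall i
          exact le_antisymm e2 (by rw [this] at e1; exact e3.trans e1)
      simp only [hc]
      exact congrArg Finset.card this
  set q : ℕ := c k with hq
  have hbound : ∀ x : Fin (k+1), c x.val < q + 1 := by
    intro x
    have : c x.val ≤ c k := cmono (by omega)
    omega
  set βo : Fin (k+1) →o Fin (q+1) :=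
    ⟨fun x => ⟨c x.val, hbound x⟩, fun a b hab => by
      simp [Fin.le_def]; exact cmono (by exact hab)⟩ with hβo
  have βosurj : Function.Surjective βo := by
    intro t
    obtain ⟨w, hw, hw'⟩ := csurj k t.val (by have := t.isLt; omega)
    exact ⟨⟨w, by omega⟩, Fin.ext hw'⟩
  -- fibers of βo
  have βfib : ∀ x y : Fin (k+1), βo x = βo y →
      ∀ i, (α i).toOrderHom x = (α i).toOrderHom y := by
    intro x y hxy i
    have hcc : c x.val = c y.val := by
      have := congrArg Fin.val hxy; exact this
    rcases le_total x.val y.val with h | h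
    · exact ((ckey x y h).1 hcc) i
    · exact (((ckey y x h).1 hcc.symm) i).symm
  have βeq : ∀ x y : Fin (k+1), (∀ i, (α i).toOrderHom x = (α i).toOrderHom y) → βo x = βo y := by
    intro x y hall
    apply Fin.ext
    simp only [hβo, OrderHom.coe_mk]
    rcases le_total x.val y.val with h | h
    · exact (ckey x y h).2 hall
    · exact ((ckey y x h).2 (fun i => (hall i).symm)).symm
  -- construct γ i
  have hγ : ∀ i, ∃ g : Fin (q+1) →o Fin (p i + 1), ∀ x, g (βo x) = (α i).toOrderHom x :=
    fun i => tfd_descend βo βosurj (α i).toOrderHom (fun x y h => βfib x y h i)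
  choose γo hγo using hγ
  refine ⟨q, SimplexCategory.mkHom βo, fun i => SimplexCategory.mkHom (γo i), ?_, ?_, ?_⟩
  · simpa using βosurj
  · intro i
    apply SimplexCategory.Hom.ext
    apply OrderHom.ext
    funext x
    simp [hγo i x]
  · intro r γ' δ' hγ's hfact
    have hfib : ∀ x y : Fin (k+1), γ'.toOrderHom x = γ'.toOrderHom y → βo x = βo y := by
      intro x y h
      apply βeq
      intro i
      have hx : (α i).toOrderHom x = (δ' i).toOrderHom (γ'.toOrderHom x) := by
        rw [hfact i]; simp only [SimplexCategory.comp_toOrderHom, OrderHom.comp_coe,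
          Function.comp_apply]
      have hy : (α i).toOrderHom y = (δ' i).toOrderHom (γ'.toOrderHom y) := by
        rw [hfact i]; simp only [SimplexCategory.comp_toOrderHom, OrderHom.comp_coe,
          Function.comp_apply]
      rw [hx, hy, h]
    obtain ⟨δo, hδo⟩ := tfd_descend γ'.toOrderHom hγ's βo hfib
    have hδsurj : Function.Surjective δo := by
      intro t
      obtain ⟨x, hx⟩ := βosurj t
      exact ⟨γ'.toOrderHom x, (hδo x).trans hx⟩
    refine ⟨SimplexCategory.mkHom δo, ⟨by simpa using hδsurj, ?_, ?_⟩, ?_⟩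
    · apply SimplexCategory.Hom.ext
      apply OrderHom.ext
      funext x
      simp only [SimplexCategory.comp_toOrderHom, OrderHom.comp_coe, Function.comp_apply,
        SimplexCategory.mkHom, SimplexCategory.Hom.toOrderHom_mk]
      exact hδo x
    · intro i
      apply SimplexCategory.Hom.ext
      apply OrderHom.ext
      funext s
      obtain ⟨x, hx⟩ := hγ's s
      have hx' : (α i).toOrderHom x = (δ' i).toOrderHom (γ'.toOrderHom x) := by
        rw [hfact i]; simp only [SimplexCategory.comp_toOrderHom, OrderHom.comp_coe,
          Function.comp_apply]
      simp only [SimplexCategory.comp_toOrderHom, OrderHom.comp_coe, Function.comp_apply,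
        SimplexCategory.mkHom, SimplexCategory.Hom.toOrderHom_mk]
      rw [← hx]
      exact (congrArg (γo i) (hδo x)).trans ((hγo i x).trans hx')
    · rintro δ₂ ⟨hs2, hc2, hg2⟩
      apply SimplexCategory.Hom.ext
      apply OrderHom.ext
      funext s
      obtain ⟨x, hx⟩ := hγ's s
      have h2 : δ₂.toOrderHom (γ'.toOrderHom x) = βo x := by
        have := congrArg SimplexCategory.Hom.toOrderHom hc2
        simp only [SimplexCategory.comp_toOrderHom] at this
        calc δ₂.toOrderHom (γ'.toOrderHom x) = (δ₂.toOrderHom.comp γ'.toOrderHom) x := rfl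
          _ = (SimplexCategory.mkHom βo).toOrderHom x := by rw [this]
          _ = βo x := by simp
      simp only [SimplexCategory.mkHom, SimplexCategory.Hom.toOrderHom_mk]
      rw [← hx]
      exact h2.trans (hδo x).symm
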